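/- Let q ≥ 1 and let Z be a random variable on F_2^q (the set of q-bit strings). Then Σ_{z ∈ F_2^q} |Pr[Z = z] − 2^{−q}| ≤ 2^q · Σ_{S ∈ F_2^q, S ≠ 0} Σ_{b ∈ {0,1}} |Pr[S·Z = b] − 1/2|, where S·Z = Σ_{i=1}^q S_i Z_i (mod 2) is the inner product over F_2. -/

import Mathlib

noncomputable def eps : ZMod 2 → ℝ := fun b => if b = 0 then 1 else -1
lemma eps_zero : eps 0 = 1 := by simp [eps]
lemma eps_ne_zero {a : ZMod 2} (h : a ≠ 0) : eps a = -1 := if_neg h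
lemma eps_add (a b : ZMod 2) : eps (a + b) = eps a * eps b := by
  rcases (show ∀ x : ZMod 2, x = 0 ∨ x = 1 by decide) a with rfl | rfl <;>
    rcases (show ∀ x : ZMod 2, x = 0 ∨ x = 1 by decide) b with rfl | rfl <;>
    simp only [eps, add_zero, zero_add, show (1:ZMod 2) + 1 = 0 from by decide] <;>
    norm_num [show (1:ZMod 2) ≠ 0 from by decide]
lemma sum_zmod2 (f : ZMod 2 → ℝ) : ∑ b, f b = f 0 + f 1 := by
  show ∑ b : Fin 2, f b = _
  exact Fin.sum_univ_two (f := f)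
lemma eps_sum {ι : Type*} (s : Finset ι) (f : ι → ZMod 2) :
    eps (∑ i ∈ s, f i) = ∏ i ∈ s, eps (f i) := by
  induction s using Finset.cons_induction with
  | empty => simp [eps_zero]
  | cons a s ha ih => rw [Finset.sum_cons, Finset.prod_cons, eps_add, ih]
lemma sum_eps_mul (u : ZMod 2) : ∑ s : ZMod 2, eps (s * u) = if u = 0 then 2 else 0 := by
  rw [sum_zmod2]; rcases (show ∀ x : ZMod 2, x = 0 ∨ x = 1 by decide) u with rfl | rfl <;>
    norm_num [eps, show (1:ZMod 2) ≠ 0 from by decide]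

lemma orth (q : ℕ) (u : Fin q → ZMod 2) :
    ∑ S : Fin q → ZMod 2, eps (∑ i, S i * u i) = if u = 0 then (2:ℝ)^q else 0 := by
  calc ∑ S : Fin q → ZMod 2, eps (∑ i, S i * u i)
      = ∑ S : Fin q → ZMod 2, ∏ i, eps (S i * u i) :=
        Finset.sum_congr rfl fun S _ => eps_sum _ _
    _ = ∑ S ∈ Fintype.piFinset (fun _ : Fin q => (Finset.univ : Finset (ZMod 2))),
          ∏ i, eps (S i * u i) := by rw [Fintype.piFinset_univ]
    _ = ∏ i, ∑ s : ZMod 2, eps (s * u i) := by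
        rw [Finset.prod_univ_sum (fun _ : Fin q => (Finset.univ : Finset (ZMod 2)))
          (fun i s => eps (s * u i))]
    _ = ∏ i, if u i = 0 then (2:ℝ) else 0 :=
        Finset.prod_congr rfl fun i _ => sum_eps_mul _
    _ = if u = 0 then (2:ℝ)^q else 0 := by
        by_cases h : u = 0
        · simp [h]
        · rw [if_neg h]
          obtain ⟨i, hi⟩ := Function.ne_iff.mp h
          exact Finset.prod_eq_zero (Finset.mem_univ i) (if_neg hi)

lemma inversion (q : ℕ) (P : (Fin q → ZMod 2) → ℝ) (z : Fin q → ZMod 2) :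
    ∑ S : Fin q → ZMod 2, eps (∑ i, S i * z i) * (∑ w, eps (∑ i, S i * w i) * P w)
      = (2:ℝ)^q * P z := by
  have key : ∀ a b : ZMod 2, (a + b = 0 ↔ b = a) := by decide
  calc ∑ S : Fin q → ZMod 2, eps (∑ i, S i * z i) * (∑ w, eps (∑ i, S i * w i) * P w)
      = ∑ S : Fin q → ZMod 2, ∑ w, eps (∑ i, S i * (z i + w i)) * P w := by
        refine Finset.sum_congr rfl fun S _ => ?_
        rw [Finset.mul_sum]
        refine Finset.sum_congr rfl fun w _ => ?_
        rw [← mul_assoc, ← eps_add, ← Finset.sum_add_distrib]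
        congr 1
        exact congrArg eps (Finset.sum_congr rfl fun i _ => (mul_add _ _ _).symm)
    _ = ∑ w, (∑ S : Fin q → ZMod 2, eps (∑ i, S i * (z i + w i))) * P w := by
        rw [Finset.sum_comm]
        exact Finset.sum_congr rfl fun w _ => (Finset.sum_mul _ _ _).symm
    _ = ∑ w, (if w = z then (2:ℝ)^q else 0) * P w := by
        refine Finset.sum_congr rfl fun w _ => ?_
        rw [orth]
        simp only [funext_iff, Pi.zero_apply]
        exact congrArg (fun t => t * P w)
          (if_congr (forall_congr' fun i => key (z i) (w i)) rfl rfl)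
    _ = (2:ℝ)^q * P z := by
        simp only [ite_mul, zero_mul]
        rw [Finset.sum_ite_eq' Finset.univ z (fun w => (2:ℝ)^q * P w)]
        simp

lemma abs_eps (a : ZMod 2) : |eps a| = 1 := by
  rcases (show ∀ x : ZMod 2, x = 0 ∨ x = 1 by decide) a with rfl | rfl <;>
    norm_num [eps, show (1:ZMod 2) ≠ 0 from by decide]

lemma hat_eq (q : ℕ) (P : (Fin q → ZMod 2) → ℝ) (hP1 : ∑ z, P z = 1)
    (S : Fin q → ZMod 2) :
    |∑ w, eps (∑ i, S i * w i) * P w|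
      = ∑ b : ZMod 2,
          |(∑ z ∈ Finset.univ.filter (fun z : Fin q → ZMod 2 => ∑ i, S i * z i = b), P z)
            - 1 / 2| := by
  have h01 : ∀ a : ZMod 2, (a = 1) ↔ ¬(a = 0) := by decide
  set A : ℝ := ∑ z ∈ Finset.univ.filter (fun z : Fin q → ZMod 2 => ∑ i, S i * z i = 0), P z
    with hA
  set B : ℝ := ∑ z ∈ Finset.univ.filter (fun z : Fin q → ZMod 2 => ∑ i, S i * z i = 1), P z
    with hB
  have hfil : Finset.univ.filter (fun z : Fin q → ZMod 2 => ∑ i, S i * z i = 1)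
      = Finset.univ.filter (fun z : Fin q → ZMod 2 => ¬ (∑ i, S i * z i = 0)) :=
    Finset.filter_congr fun z _ => h01 _
  have hAB : A + B = 1 := by
    rw [hA, hB, hfil, Finset.sum_filter_add_sum_filter_not, hP1]
  have hF : ∑ w, eps (∑ i, S i * w i) * P w = A - B := by
    rw [← Finset.sum_filter_add_sum_filter_not Finset.univ
      (fun z : Fin q → ZMod 2 => ∑ i, S i * z i = 0) (fun w => eps (∑ i, S i * w i) * P w)]
    have e1 : ∑ z ∈ Finset.univ.filter (fun z : Fin q → ZMod 2 => ∑ i, S i * z i = 0),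
        eps (∑ i, S i * z i) * P z = A := by
      refine Finset.sum_congr rfl fun z hz => ?_
      rw [(Finset.mem_filter.mp hz).2, eps_zero, one_mul]
    have e2 : ∑ z ∈ Finset.univ.filter (fun z : Fin q → ZMod 2 => ¬ (∑ i, S i * z i = 0)),
        eps (∑ i, S i * z i) * P z = -B := by
      rw [hB, hfil, ← Finset.sum_neg_distrib]
      refine Finset.sum_congr rfl fun z hz => ?_
      rw [eps_ne_zero (Finset.mem_filter.mp hz).2]
      ring
    rw [e1, e2]
    ring
  rw [hF, sum_zmod2, ← hA, ← hB]
  have hB' : B = 1 - A := by linarith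
  rw [hB']
  have h1 : A - B = 2 * (A - 1/2) := by rw [hB']; ring
  rw [hB'] at h1
  have : |(1 - A) - 1/2| = |A - 1/2| := by rw [abs_sub_comm]; ring_nf
  rw [this, h1, abs_mul]
  norm_num
  ring

/-- Let `q ≥ 1` and let `Z` be a random variable on `𝔽₂^q` (the set of `q`-bit
strings), given by its distribution `P`. Then
`Σ_z |Pr[Z = z] − 2^{−q}| ≤ 2^q · Σ_{S ≠ 0} Σ_{b ∈ 𝔽₂} |Pr[S·Z = b] − 1/2|`,
where `S·Z = Σᵢ Sᵢ Zᵢ` is the inner product over `𝔽₂`. -/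
theorem stmt_6 (q : ℕ) (hq : 1 ≤ q)
    (P : (Fin q → ZMod 2) → ℝ) (hP0 : ∀ z, 0 ≤ P z) (hP1 : ∑ z, P z = 1) :
    ∑ z : Fin q → ZMod 2, |P z - ((2 : ℝ) ^ q)⁻¹|
      ≤ (2 : ℝ) ^ q *
        ∑ S ∈ Finset.univ.filter (fun S : Fin q → ZMod 2 => S ≠ 0),
          ∑ b : ZMod 2,
            |(∑ z ∈ Finset.univ.filter (fun z : Fin q → ZMod 2 => ∑ i, S i * z i = b), P z)
              - 1 / 2| := by
  have h2q : (0:ℝ) < 2^q := by positivity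
  set F : (Fin q → ZMod 2) → ℝ := fun S => ∑ w, eps (∑ i, S i * w i) * P w with hFdef
  have hF0 : F 0 = 1 := by
    simp only [hFdef, Pi.zero_apply, zero_mul, Finset.sum_const_zero, eps_zero, one_mul]
    exact hP1
  have hfil : Finset.univ.filter (fun S : Fin q → ZMod 2 => S ≠ 0)
      = Finset.univ.erase 0 := Finset.filter_ne' _ _
  have hdecomp : ∀ z, P z - ((2:ℝ)^q)⁻¹
      = ((2:ℝ)^q)⁻¹ * ∑ S ∈ Finset.univ.filter (fun S : Fin q → ZMod 2 => S ≠ 0),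
          eps (∑ i, S i * z i) * F S := by
    intro z
    have hsum : ∑ S ∈ Finset.univ.filter (fun S : Fin q → ZMod 2 => S ≠ 0),
        eps (∑ i, S i * z i) * F S = (2:ℝ)^q * P z - 1 := by
      have h := Finset.add_sum_erase Finset.univ
        (fun S : Fin q → ZMod 2 => eps (∑ i, S i * z i) * F S) (Finset.mem_univ 0)
      rw [hfil]
      have h0 : eps (∑ i, (0 : Fin q → ZMod 2) i * z i) * F 0 = 1 := by
        simp [hF0, eps_zero]
      rw [inversion q P z] at h
      beta_reduce at h
      linarith [h, h0]
    rw [hsum]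
    field_simp
  have hzbound : ∀ z, |P z - ((2:ℝ)^q)⁻¹|
      ≤ ((2:ℝ)^q)⁻¹ * ∑ S ∈ Finset.univ.filter (fun S : Fin q → ZMod 2 => S ≠ 0), |F S| := by
    intro z
    rw [hdecomp z, abs_mul, abs_of_pos (inv_pos.mpr h2q)]
    refine mul_le_mul_of_nonneg_left ?_ (le_of_lt (inv_pos.mpr h2q))
    refine le_trans (Finset.abs_sum_le_sum_abs _ _) ?_
    refine Finset.sum_le_sum fun S _ => ?_
    rw [abs_mul, abs_eps, one_mul]
  have hcard : (Finset.univ : Finset (Fin q → ZMod 2)).card = 2^q := by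
    simp [Finset.card_univ]
  have step1 : ∑ z : Fin q → ZMod 2, |P z - ((2:ℝ)^q)⁻¹|
      ≤ ∑ S ∈ Finset.univ.filter (fun S : Fin q → ZMod 2 => S ≠ 0), |F S| := by
    refine le_trans (Finset.sum_le_sum fun z _ => hzbound z) ?_
    rw [Finset.sum_const, hcard, nsmul_eq_mul]
    push_cast
    rw [← mul_assoc, mul_inv_cancel₀ (ne_of_gt h2q), one_mul]
  have step2 : ∑ S ∈ Finset.univ.filter (fun S : Fin q → ZMod 2 => S ≠ 0), |F S|
      = ∑ S ∈ Finset.univ.filter (fun S : Fin q → ZMod 2 => S ≠ 0),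
          ∑ b : ZMod 2,
            |(∑ z ∈ Finset.univ.filter (fun z : Fin q → ZMod 2 => ∑ i, S i * z i = b), P z)
              - 1 / 2| :=
    Finset.sum_congr rfl fun S _ => hat_eq q P hP1 S
  have hone : (1:ℝ) ≤ 2^q := by
    calc (1:ℝ) = 1^q := (one_pow q).symm
    _ ≤ 2^q := pow_le_pow_left₀ (by norm_num) (by norm_num) q
  refine le_trans step1 ?_
  rw [step2]
  refine le_mul_of_one_le_left ?_ hone
  exact Finset.sum_nonneg fun S _ => Finset.sum_nonneg fun b _ => abs_nonneg _
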